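/- Let $q$ be a prime power and let $H_q$ be the group of matrices $\begin{pmatrix} a & t \\ 0 & 1 \end{pmatrix}$ with $a \in \mathbf{F}_q^{\times}$ and $t \in \mathbf{F}_q$. Then, for $q \ge 2$, $c(H_q) = q + O(\tau(q-1))$ and $s(H_q) = q(2q-1) + O(\tau(q-1))$, where $\tau(q-1)$ is the number of positive divisors of $q-1$ and the implied constants are absolute. In particular $c(H_q) \sim q$ as $q \to +\infty$. -/

import Mathlib

open MeasureTheory ProbabilityTheory Pointwise ENNReal Matrix

namespace Chebotarev

variable {G : Type*} [Group G]

/-- The conjugacy classes of the tuple `x 0, …, x (n-1)` *generate* `G`: every choice of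
representatives from these conjugacy classes generates `G`. -/
def InvGen {n : ℕ} (x : Fin n → G) : Prop :=
  ∀ y : Fin n → G, (∀ i, IsConj (x i) (y i)) → Subgroup.closure (Set.range y) = ⊤

/-- The waiting time `τ = min {n ≥ 1 | the conjugacy classes of X₁, …, Xₙ generate G}`,
with value `∞` if no such `n` exists. -/
noncomputable def tau {Ω : Type*} (X : ℕ → Ω → G) (ω : Ω) : ℝ≥0∞ :=
  sInf {t : ℝ≥0∞ | ∃ n : ℕ, t = n ∧ 1 ≤ n ∧ InvGen (fun i : Fin n => X i ω)}

/-- `(Xₙ)` is a sequence of independent random variables, each uniformly distributed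
on the (finite) group `G`, on a probability space `(Ω, P)`. -/
def IsChebSetup {Ω : Type*} [MeasurableSpace Ω] (P : Measure Ω) (X : ℕ → Ω → G) : Prop :=
  IsProbabilityMeasure P ∧ (∀ n, @Measurable Ω G _ ⊤ (X n)) ∧
    iIndepFun (m := fun _ : ℕ => (⊤ : MeasurableSpace G)) X P ∧
    ∀ (n : ℕ) (g : G), P {ω | X n ω = g} = (Nat.card G : ℝ≥0∞)⁻¹

/-- The Chebotarev invariant `c(G) = E(τ)`. -/
noncomputable def cheb {Ω : Type*} [MeasurableSpace Ω] (P : Measure Ω) (X : ℕ → Ω → G) : ℝ :=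
  (∫⁻ ω, tau X ω ∂P).toReal

/-- The secondary Chebotarev invariant `s(G) = E(τ²)`. -/
noncomputable def scheb {Ω : Type*} [MeasurableSpace Ω] (P : Measure Ω) (X : ℕ → Ω → G) : ℝ :=
  (∫⁻ ω, (tau X ω) ^ 2 ∂P).toReal

/-- normalized density `ν(A) = |A| / |G|`. -/
noncomputable def nu (G : Type*) [Group G] (A : Set G) : ℝ :=
  (Nat.card A : ℝ) / (Nat.card G : ℝ)

/-- Conjugacy classes of subgroups of `G` (orbits of the conjugation action). -/
abbrev SubConjClass (G : Type*) [Group G] :=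
  Quotient (MulAction.orbitRel (ConjAct G) (Subgroup G))

/-- The conjugacy class of a subgroup. -/
def cls (H : Subgroup G) : SubConjClass G :=
  Quotient.mk (MulAction.orbitRel (ConjAct G) (Subgroup G)) H

/-- `max(G)`: the (finite) set of conjugacy classes of maximal proper subgroups of `G`. -/
noncomputable def maxClasses (G : Type*) [Group G] [Finite G] : Finset (SubConjClass G) :=
  haveI : Finite (Subgroup G) :=
    Finite.of_injective (fun H => (H : Set G)) SetLike.coe_injective
  Set.Finite.toFinset (Set.toFinite {c : SubConjClass G | ∃ H : Subgroup G, cls H = c ∧ IsCoatom H})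

/-- `𝓗♯`: the set of elements of `G` conjugate to an element of some subgroup in the
conjugacy class `c` of subgroups. -/
def sharp (c : SubConjClass G) : Set G :=
  {x : G | ∃ H : Subgroup G, cls H = c ∧ ∃ h ∈ H, IsConj h x}

end Chebotarev


/-- The group `H_q` of matrices `[[a, t], [0, 1]]` with `a ∈ F_q^×`, `t ∈ F_q`, realized as
the subgroup of `GL(2, F)` of matrices whose bottom row is `(0, 1)`. -/
def Hq (F : Type*) [Field F] : Subgroup (GL (Fin 2) F) where
  carrier := {M | (M : Matrix (Fin 2) (Fin 2) F) 1 0 = 0 ∧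
    (M : Matrix (Fin 2) (Fin 2) F) 1 1 = 1}
  one_mem' := by
    constructor <;> simp [Matrix.one_apply]
  mul_mem' := by
    rintro a b ⟨ha0, ha1⟩ ⟨hb0, hb1⟩
    constructor <;>
      simp [Units.val_mul, Matrix.mul_apply, Fin.sum_univ_two, ha0, ha1, hb0, hb1]
  inv_mem' := by
    rintro M ⟨h0, h1⟩
    have hMul : (↑M : Matrix (Fin 2) (Fin 2) F) * (↑M⁻¹ : Matrix (Fin 2) (Fin 2) F) = 1 :=
      Units.mul_inv M
    have e0 : ((↑M : Matrix (Fin 2) (Fin 2) F) * (↑M⁻¹ : Matrix (Fin 2) (Fin 2) F)) 1 0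
        = (1 : Matrix (Fin 2) (Fin 2) F) 1 0 := by rw [hMul]
    have e1 : ((↑M : Matrix (Fin 2) (Fin 2) F) * (↑M⁻¹ : Matrix (Fin 2) (Fin 2) F)) 1 1
        = (1 : Matrix (Fin 2) (Fin 2) F) 1 1 := by rw [hMul]
    rw [Matrix.mul_apply, Fin.sum_univ_two, h0, h1] at e0 e1
    simp only [Matrix.one_apply, zero_mul, one_mul, zero_add] at e0 e1
    constructor
    · simpa using e0
    · simpa using e1


namespace HqAux

variable {F : Type*} [Field F]

/-- the matrix [[a,t],[0,1]] -/
def eMat (a t : F) : Matrix (Fin 2) (Fin 2) F := !![a, t; 0, 1]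

lemma eMat_mul (a t b s : F) : eMat a t * eMat b s = eMat (a * b) (a * s + t) := by
  simp [eMat, Matrix.mul_fin_two]

lemma eMat_one : eMat (1 : F) 0 = 1 := by simp [eMat, Matrix.one_fin_two]

/-- the element of GL₂ -/
def eGL (a : Fˣ) (t : F) : GL (Fin 2) F where
  val := eMat a t
  inv := eMat (↑a⁻¹) (-(↑a⁻¹ : F) * t)
  val_inv := by
    rw [eMat_mul]
    rw [show ((a : F) * ↑a⁻¹ : F) = 1 by exact_mod_cast a.mul_inv]
    rw [show ((a:F) * (-(↑a⁻¹:F) * t) + t : F) = ((a:F) * (↑a⁻¹:F)) * (-t) + t by ring]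
    rw [show ((a : F) * ↑a⁻¹ : F) = 1 by exact_mod_cast a.mul_inv]
    simp [eMat_one]
  inv_val := by
    rw [eMat_mul]
    rw [show ((↑a⁻¹ : F) * a : F) = 1 by exact_mod_cast a.inv_mul]
    rw [show ((↑a⁻¹:F) * t + -(↑a⁻¹:F) * t : F) = 0 by ring]
    exact eMat_one

/-- the element of Hq -/
def eH (a : Fˣ) (t : F) : ↥(Hq F) :=
  ⟨eGL a t, by constructor <;> simp [eGL, eMat]⟩

lemma eH_mul (a b : Fˣ) (t s : F) : eH a t * eH b s = eH (a * b) ((a : F) * s + t) := by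
  apply Subtype.ext; apply Units.ext
  show eMat (a : F) t * eMat (b : F) s = eMat ((a*b : Fˣ) : F) ((a:F) * s + t)
  rw [eMat_mul]; push_cast; ring_nf

lemma eH_one : eH (1 : Fˣ) 0 = 1 := by
  apply Subtype.ext; apply Units.ext
  show eMat ((1 : Fˣ) : F) 0 = 1
  simpa using eMat_one

lemma eH_inv (a : Fˣ) (t : F) : (eH a t)⁻¹ = eH a⁻¹ (-(↑a⁻¹ : F) * t) := by
  apply Subtype.ext; apply Units.ext
  rfl

end HqAux

namespace HqAux
variable {F : Type*} [Field F]

/-- top-left entry -/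
def aEnt (g : ↥(Hq F)) : F := ((g : GL (Fin 2) F) : Matrix (Fin 2) (Fin 2) F) 0 0

/-- top-right entry -/
def bEnt (g : ↥(Hq F)) : F := ((g : GL (Fin 2) F) : Matrix (Fin 2) (Fin 2) F) 0 1

lemma coe_mul_mat (g h : ↥(Hq F)) :
    ((↑(g * h) : GL (Fin 2) F) : Matrix (Fin 2) (Fin 2) F)
      = ((g : GL (Fin 2) F) : Matrix (Fin 2) (Fin 2) F)
        * ((h : GL (Fin 2) F) : Matrix (Fin 2) (Fin 2) F) := rfl

lemma aEnt_mul (g h : ↥(Hq F)) : aEnt (g * h) = aEnt g * aEnt h := by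
  have h10 : ((h : GL (Fin 2) F) : Matrix (Fin 2) (Fin 2) F) 1 0 = 0 := h.2.1
  simp [aEnt, coe_mul_mat, Matrix.mul_apply, Fin.sum_univ_two, h10]

lemma bEnt_mul (g h : ↥(Hq F)) : bEnt (g * h) = aEnt g * bEnt h + bEnt g := by
  have h11 : ((h : GL (Fin 2) F) : Matrix (Fin 2) (Fin 2) F) 1 1 = 1 := h.2.2
  simp [aEnt, bEnt, coe_mul_mat, Matrix.mul_apply, Fin.sum_univ_two, h11]

lemma aEnt_one : aEnt (1 : ↥(Hq F)) = 1 := by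
  simp [aEnt]

lemma bEnt_one : bEnt (1 : ↥(Hq F)) = 0 := by
  simp [bEnt]

lemma aEnt_eH (a : Fˣ) (t : F) : aEnt (eH a t) = a := by
  simp [aEnt, eH, eGL, eMat]

lemma bEnt_eH (a : Fˣ) (t : F) : bEnt (eH a t) = t := by
  simp [bEnt, eH, eGL, eMat]

/-- projection to Fˣ -/
def pihom : ↥(Hq F) →* Fˣ where
  toFun g := ⟨aEnt g, aEnt g⁻¹, by rw [← aEnt_mul, mul_inv_cancel, aEnt_one],
    by rw [← aEnt_mul, inv_mul_cancel, aEnt_one]⟩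
  map_one' := by ext; exact aEnt_one
  map_mul' g h := by ext; exact aEnt_mul g h

lemma pihom_coe (g : ↥(Hq F)) : (pihom g : F) = aEnt g := rfl

lemma pihom_eH (a : Fˣ) (t : F) : pihom (eH a t) = a := by
  ext; exact aEnt_eH a t

/-- decomposition -/
lemma eH_decomp (g : ↥(Hq F)) : g = eH (pihom g) (bEnt g) := by
  apply Subtype.ext; apply Units.ext
  apply Matrix.ext
  intro i j
  fin_cases i <;> fin_cases j
  · exact (aEnt_eH (pihom g) (bEnt g)).symm
  · exact (bEnt_eH (pihom g) (bEnt g)).symm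
  · show ((g : GL (Fin 2) F) : Matrix (Fin 2) (Fin 2) F) 1 0 = _
    rw [g.2.1]
    show (0 : F) = eMat _ _ 1 0
    simp [eMat]
  · show ((g : GL (Fin 2) F) : Matrix (Fin 2) (Fin 2) F) 1 1 = _
    rw [g.2.2]
    show (1 : F) = eMat _ _ 1 1
    simp [eMat]

lemma eH_inj {a b : Fˣ} {t s : F} (h : eH a t = eH (F := F) b s) : a = b ∧ t = s := by
  constructor
  · have := congrArg pihom h; rwa [pihom_eH, pihom_eH] at this
  · have := congrArg bEnt h; rwa [bEnt_eH, bEnt_eH] at this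

/-- the equivalence Fˣ × F ≃ Hq F -/
noncomputable def eEquiv : Fˣ × F ≃ ↥(Hq F) where
  toFun p := eH p.1 p.2
  invFun g := (pihom g, bEnt g)
  left_inv p := by simp [pihom_eH, bEnt_eH]
  right_inv g := (eH_decomp g).symm

end HqAux

namespace HqAux
variable {F : Type*} [Field F]

lemma conj_translation (m : ↥(Hq F)) (t : F) :
    m * eH 1 t * m⁻¹ = eH 1 ((pihom m : F) * t) := by
  conv_lhs => rw [eH_decomp m]
  rw [eH_inv, eH_mul, eH_mul]
  congr 1
  · simp
  · push_cast
    field_simp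
    ring

/-- any element is a translation times something with the same pihom -/
lemma eH_factor (a : Fˣ) (x y : F) : eH a x = eH 1 (x - y) * eH a y := by
  rw [eH_mul]; congr 1 <;> simp

/-- classification: a subgroup either avoids nontrivial translations, or projects properly -/
lemma subgroup_classify (M : Subgroup ↥(Hq F)) (hM : M ≠ ⊤) :
    (∀ g ∈ M, g = 1 ∨ pihom g ≠ 1) ∨ M.map pihom ≠ ⊤ := by
  by_contra hcon
  push_neg at hcon
  obtain ⟨⟨g, hgM, hg1, hgpi⟩, hmap⟩ := hcon
  -- g is a nontrivial translation eH 1 t, t ≠ 0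
  set t := bEnt g with ht
  have hgt : g = eH 1 t := by rw [eH_decomp g, hgpi]
  have htne : t ≠ 0 := by
    intro h0
    rw [h0, eH_one] at hgt
    exact hg1 hgt
  -- all translations are in M
  have htrans : ∀ s : F, eH 1 s ∈ M := by
    intro s
    rcases eq_or_ne s 0 with hs | hs
    · rw [hs, eH_one]; exact M.one_mem
    · set u : Fˣ := Units.mk0 s hs * (Units.mk0 t htne)⁻¹ with hu
      have : u ∈ M.map pihom := by rw [hmap]; trivial
      obtain ⟨m, hmM, hmu⟩ := this
      have : m * (eH 1 t) * m⁻¹ ∈ M := M.mul_mem (M.mul_mem hmM (hgt ▸ hgM)) (M.inv_mem hmM)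
      rw [conj_translation, hmu] at this
      have hut : (u : F) * t = s := by
        rw [hu]
        push_cast
        field_simp
        simp only [Units.val_mk0]
        field_simp
      rwa [hut] at this
  -- M is everything
  apply hM
  rw [eq_top_iff]
  intro h _
  have : pihom h ∈ M.map pihom := by rw [hmap]; trivial
  obtain ⟨m, hmM, hmpi⟩ := this
  have hdec : h = eH 1 (bEnt h - bEnt m) * m := by
    conv_lhs => rw [eH_decomp h, ← hmpi]
    rw [eH_factor (pihom m) (bEnt h) (bEnt m)]
    congr 1
    exact (eH_decomp m).symm
  rw [hdec]
  exact M.mul_mem (htrans _) hmM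

/-- the diagonal subgroup -/
def diagSub : Subgroup ↥(Hq F) where
  carrier := {g | bEnt g = 0}
  one_mem' := bEnt_one
  mul_mem' := by
    intro g h hg hh
    show bEnt (g * h) = 0
    rw [bEnt_mul]
    simp [Set.mem_setOf_eq.mp hg, Set.mem_setOf_eq.mp hh]
  inv_mem' := by
    intro g hg
    have hg' : bEnt g = 0 := hg
    show bEnt g⁻¹ = 0
    have : g⁻¹ = eH (pihom g)⁻¹ (-(↑(pihom g)⁻¹ : F) * bEnt g) := by
      conv_lhs => rw [eH_decomp g]
      exact eH_inv _ _
    rw [this, bEnt_eH, hg']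
    ring

lemma diagSub_ne_top [Nontrivial F] : (diagSub : Subgroup ↥(Hq F)) ≠ ⊤ := by
  intro h
  have h1 : eH (1 : Fˣ) (1 : F) ∈ diagSub := by rw [h]; trivial
  have h2 : bEnt (eH (1 : Fˣ) (1 : F)) = 0 := h1
  rw [bEnt_eH] at h2
  exact one_ne_zero h2

lemma pihom_eq_of_isConj {g h : ↥(Hq F)} (hc : IsConj g h) : pihom g = pihom h := by
  have := (pihom (F := F)).map_isConj hc
  exact isConj_iff_eq.mp this

open Chebotarev in
lemma notInvGen_iff [Nontrivial F] {n : ℕ} (x : Fin n → ↥(Hq F)) :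
    ¬ InvGen x ↔ (∀ i, x i = 1 ∨ pihom (x i) ≠ 1) ∨
      ∃ K : Subgroup Fˣ, K ≠ ⊤ ∧ ∀ i, pihom (x i) ∈ K := by
  constructor
  · intro hn
    rw [InvGen] at hn
    push_neg at hn
    obtain ⟨y, hconj, hne⟩ := hn
    set M := Subgroup.closure (Set.range y) with hM
    have hyM : ∀ i, y i ∈ M := fun i => Subgroup.subset_closure ⟨i, rfl⟩
    rcases subgroup_classify M hne with hA | hB
    · left
      intro i
      rcases hA (y i) (hyM i) with h1 | h2
      · left
        have : IsConj (x i) 1 := h1 ▸ hconj i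
        exact (isConj_one_right.mp this.symm)
      · right
        rw [pihom_eq_of_isConj (hconj i)]
        exact h2
    · right
      exact ⟨M.map pihom, hB, fun i => by
        rw [pihom_eq_of_isConj (hconj i)]
        exact ⟨y i, hyM i, rfl⟩⟩
  · rintro (hA | ⟨K, hK, hKx⟩) hInv
    · -- representatives inside diagonal
      classical
      set y : Fin n → ↥(Hq F) := fun i =>
        if x i = 1 then 1 else eH (pihom (x i)) 0 with hy
      have hconj : ∀ i, IsConj (x i) (y i) := by
        intro i
        rcases eq_or_ne (x i) 1 with h1 | h1
        · have hyi : y i = 1 := by simp [hy, h1]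
          rw [hyi, h1]
        · have ha : pihom (x i) ≠ 1 := (hA i).resolve_left h1
          have haF : ((pihom (x i) : Fˣ) : F) ≠ 1 := by
            intro h; exact ha (Units.ext h)
          have hsub : ((pihom (x i) : Fˣ) : F) - 1 ≠ 0 := sub_ne_zero.mpr haF
          have hyi : y i = eH (pihom (x i)) 0 := by simp [hy, h1]
          rw [hyi, isConj_iff]
          set a := pihom (x i)
          set t := bEnt (x i)
          refine ⟨eH 1 (t * ((a : F) - 1)⁻¹), ?_⟩
          conv_lhs => rw [eH_decomp (x i)]
          rw [eH_mul, eH_inv, eH_mul]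
          congr 1
          · simp
            rfl
          · push_cast
            field_simp
            ring
      have := hInv y hconj
      have hsub : Subgroup.closure (Set.range y) ≤ diagSub := by
        rw [Subgroup.closure_le]
        rintro _ ⟨i, rfl⟩
        rcases eq_or_ne (x i) 1 with h1 | h1
        · rw [hy]; simp only [if_pos h1]
          exact Subgroup.one_mem _
        · rw [hy]; simp only [if_neg h1]
          show bEnt _ = 0
          rw [bEnt_eH]
      rw [this] at hsub
      exact diagSub_ne_top (top_le_iff.mp hsub)
    · have := hInv x (fun i => IsConj.refl _)
      have hsub : Subgroup.closure (Set.range x) ≤ K.comap pihom := by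
        rw [Subgroup.closure_le]
        rintro _ ⟨i, rfl⟩
        exact hKx i
      rw [this] at hsub
      obtain ⟨u, hu⟩ : ∃ u : Fˣ, u ∉ K := by
        by_contra hall
        push_neg at hall
        exact hK ((Subgroup.eq_top_iff' K).mpr hall)
      apply hu
      have : eH u 0 ∈ K.comap pihom := hsub trivial
      simpa [pihom_eH] using this

end HqAux

namespace HqAux
variable {F : Type*} [Field F] [Fintype F]

instance : Finite ↥(Hq F) := by
  have : Finite (GL (Fin 2) F) := by
    classical
    exact inferInstance
  infer_instance

/-- the set corresponding to the diagonal class -/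
def A1set (F : Type*) [Field F] : Set ↥(Hq F) := {g | g = 1 ∨ pihom g ≠ 1}

lemma card_Hq : Nat.card ↥(Hq F) = (Fintype.card F - 1) * Fintype.card F := by
  classical
  rw [← Nat.card_congr (eEquiv (F := F)), Nat.card_prod, Nat.card_eq_fintype_card,
    Nat.card_eq_fintype_card, Fintype.card_units]

lemma card_A1_compl : Nat.card ↥((A1set F)ᶜ) = Fintype.card F - 1 := by
  classical
  have hbij : Function.Bijective (fun t : {t : F // t ≠ 0} =>
      (⟨eH 1 t.1, by
        simp only [A1set, Set.mem_compl_iff, Set.mem_setOf_eq, not_or, not_not]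
        constructor
        · intro h
          rw [← eH_one] at h
          exact t.2 (eH_inj h).2
        · exact pihom_eH 1 t.1⟩ : ↥((A1set F)ᶜ))) := by
    constructor
    · intro t s h
      have h' : eH (F := F) 1 t.1 = eH 1 s.1 := congrArg Subtype.val h
      exact Subtype.ext (eH_inj h').2
    · rintro ⟨g, hg⟩
      simp only [A1set, Set.mem_compl_iff, Set.mem_setOf_eq, not_or, not_not] at hg
      refine ⟨⟨bEnt g, ?_⟩, ?_⟩
      · intro h0
        apply hg.1
        rw [eH_decomp g, hg.2, h0, eH_one]
      · apply Subtype.ext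
        show eH 1 (bEnt g) = g
        conv_rhs => rw [eH_decomp g, hg.2]
  rw [← Nat.card_congr (Equiv.ofBijective _ hbij), Nat.card_eq_fintype_card,
    ← Fintype.card_units (α := F), ← Nat.card_eq_fintype_card, ← Nat.card_eq_fintype_card]
  exact (Nat.card_congr (unitsEquivNeZero (G₀ := F))).symm

lemma card_A1_real (hq : 2 ≤ Fintype.card F) :
    (Nat.card ↥(A1set F) : ℝ)
      = ((Fintype.card F : ℝ) - 1) * ((Fintype.card F : ℝ) - 1) := by
  have hsum := Set.ncard_add_ncard_compl (A1set F)
  rw [Nat.card_coe_set_eq] at *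
  have h1 : (A1set F)ᶜ.ncard = Fintype.card F - 1 := by
    rw [← Nat.card_coe_set_eq]; exact card_A1_compl
  rw [h1, card_Hq] at hsum
  obtain ⟨Q, hQ⟩ : ∃ Q, Fintype.card F = Q + 1 := ⟨Fintype.card F - 1, by omega⟩
  rw [hQ] at hsum ⊢
  simp only [Nat.add_sub_cancel] at hsum
  have hm : (A1set F).ncard = Q * Q := by
    have : Q * (Q + 1) = Q * Q + Q := by ring
    omega
  rw [hm]
  push_cast
  ring

lemma card_AK (K : Subgroup Fˣ) :
    Nat.card ↥(pihom ⁻¹' (K : Set Fˣ) : Set ↥(Hq F)) = Nat.card K * Fintype.card F := by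
  classical
  have hbij : Function.Bijective (fun p : ↥K × F =>
      (⟨eH p.1.1 p.2, by
        simp only [Set.mem_preimage, pihom_eH, SetLike.mem_coe]
        exact p.1.2⟩ : ↥(pihom ⁻¹' (K : Set Fˣ) : Set ↥(Hq F)))) := by
    constructor
    · rintro ⟨⟨a, ha⟩, t⟩ ⟨⟨b, hb⟩, s⟩ h
      have h' : eH (F := F) a t = eH b s := congrArg Subtype.val h
      obtain ⟨h1, h2⟩ := eH_inj h'
      simp only [Prod.mk.injEq, Subtype.ext_iff]
      exact ⟨h1, h2⟩
    · rintro ⟨g, hg⟩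
      refine ⟨⟨⟨pihom g, hg⟩, bEnt g⟩, ?_⟩
      apply Subtype.ext
      exact (eH_decomp g).symm
  rw [← Nat.card_congr (Equiv.ofBijective _ hbij), Nat.card_prod, Nat.card_eq_fintype_card (α := F)]

lemma card_K_le (K : Subgroup Fˣ) (hK : K ≠ ⊤) :
    2 * Nat.card K ≤ Fintype.card F - 1 := by
  have hdvd : Nat.card K ∣ Nat.card Fˣ := Subgroup.card_subgroup_dvd_card K
  have hne : Nat.card K ≠ Nat.card Fˣ := fun h => hK (Subgroup.eq_top_of_card_eq K h)
  have hpos : 0 < Nat.card Fˣ := Nat.card_pos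
  obtain ⟨k, hk⟩ := hdvd
  have hk1 : k ≠ 1 := by rintro rfl; rw [mul_one] at hk; exact hne hk.symm
  have hk0 : k ≠ 0 := by rintro rfl; rw [mul_zero] at hk; omega
  have : 2 ≤ k := by omega
  have h2 : 2 * Nat.card K ≤ k * Nat.card K := Nat.mul_le_mul_right _ this
  rw [mul_comm k, ← hk] at h2
  rwa [show Nat.card Fˣ = Fintype.card F - 1 by
    rw [Nat.card_units, Nat.card_eq_fintype_card]] at h2

/-- uniqueness of subgroups of Fˣ of given cardinality -/
lemma subgroup_units_card_inj {K K' : Subgroup Fˣ}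
    (h : Nat.card K = Nat.card K') : K = K' := by
  classical
  letI : Fintype Fˣ := Fintype.ofFinite _
  have key : ∀ L : Subgroup Fˣ, (L : Set Fˣ).toFinset
      = Finset.univ.filter (fun b : Fˣ => b ^ (Nat.card L) = 1) := by
    intro L
    have hsub : (L : Set Fˣ).toFinset ⊆ Finset.univ.filter (fun b => b ^ (Nat.card L) = 1) := by
      intro b hb
      simp only [Set.mem_toFinset, SetLike.mem_coe] at hb
      simp only [Finset.mem_filter, Finset.mem_univ, true_and]
      have : (⟨b, hb⟩ : L) ^ (Nat.card L) = 1 := pow_card_eq_one'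
      simpa only [SubgroupClass.coe_pow, OneMemClass.coe_one] using congrArg Subtype.val this
    apply Finset.eq_of_subset_of_card_le hsub
    calc (Finset.univ.filter (fun b : Fˣ => b ^ (Nat.card L) = 1)).card
        ≤ Nat.card L := IsCyclic.card_pow_eq_one_le Nat.card_pos
      _ = (L : Set Fˣ).toFinset.card := by
          rw [Set.toFinset_card, ← Nat.card_eq_fintype_card]
          rfl
  apply SetLike.coe_injective
  have hkey := key K
  rw [h, ← key K'] at hkey
  exact Set.toFinset_inj.mp hkey

end HqAux

namespace HqAux

open ENNReal

lemma tsum_geo_ofReal {x : ℝ} (h0 : 0 ≤ x) (h1 : x < 1) :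
    ∑' n : ℕ, (ENNReal.ofReal x) ^ n = ENNReal.ofReal (1 - x)⁻¹ := by
  rw [ENNReal.tsum_geometric, ENNReal.ofReal_inv_of_pos (by linarith),
    ENNReal.ofReal_sub _ h0, ENNReal.ofReal_one]

lemma tsum_lin_real {x : ℝ} (h0 : 0 ≤ x) (h1 : x < 1) :
    Summable (fun n : ℕ => (2 * (n : ℝ) + 1) * x ^ n) ∧
    ∑' n : ℕ, ((2 * (n : ℝ) + 1) * x ^ n) = (1 + x) / (1 - x) ^ 2 := by
  have hx : ‖x‖ < 1 := by rwa [Real.norm_eq_abs, abs_of_nonneg h0]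
  have s1 : Summable (fun n : ℕ => (n : ℝ) * x ^ n) := by
    simpa using summable_pow_mul_geometric_of_norm_lt_one 1 hx
  have s2 : Summable (fun n : ℕ => x ^ n) := summable_geometric_of_lt_one h0 h1
  have heq : (fun n : ℕ => (2 * (n : ℝ) + 1) * x ^ n)
      = fun n : ℕ => 2 * ((n : ℝ) * x ^ n) + x ^ n := by
    funext n; ring
  constructor
  · rw [heq]; exact ((s1.mul_left 2).add s2)
  · rw [heq, Summable.tsum_add (s1.mul_left 2) s2, tsum_mul_left,
      tsum_coe_mul_geometric_of_norm_lt_one hx, tsum_geometric_of_lt_one h0 h1]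
    have : (1 : ℝ) - x ≠ 0 := by linarith
    field_simp
    ring

lemma tsum_lin_ofReal {x : ℝ} (h0 : 0 ≤ x) (h1 : x < 1) :
    ∑' n : ℕ, (2 * (n : ℝ≥0∞) + 1) * (ENNReal.ofReal x) ^ n
      = ENNReal.ofReal ((1 + x) / (1 - x) ^ 2) := by
  obtain ⟨hs, hv⟩ := tsum_lin_real h0 h1
  rw [← hv, ENNReal.ofReal_tsum_of_nonneg (fun n => by positivity) hs]
  refine tsum_congr fun n => ?_
  rw [ENNReal.ofReal_mul (by positivity), ENNReal.ofReal_pow h0]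
  congr 1
  rw [show (2 * (n:ℝ) + 1) = ((2 * n + 1 : ℕ) : ℝ) by push_cast; ring,
    ENNReal.ofReal_natCast]
  push_cast
  ring

end HqAux

namespace Chebotarev

variable {G : Type*} [Group G]

lemma invGen_succ {n : ℕ} {x : ℕ → G} (h : InvGen (fun i : Fin n => x i)) :
    InvGen (fun i : Fin (n+1) => x i) := by
  intro y hy
  have h' := h (fun i : Fin n => y i.castSucc) (fun i => hy i.castSucc)
  rw [eq_top_iff, ← h']
  apply Subgroup.closure_mono
  rintro _ ⟨i, rfl⟩
  exact ⟨i.castSucc, rfl⟩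

lemma invGen_le {m n : ℕ} {x : ℕ → G} (h : m ≤ n) (hm : InvGen (fun i : Fin m => x i)) :
    InvGen (fun i : Fin n => x i) := by
  induction n with
  | zero => exact (Nat.le_zero.mp h) ▸ hm
  | succ k ih =>
    rcases Nat.lt_or_ge m (k+1) with hlt | hge
    · exact invGen_succ (ih (by omega))
    · have : m = k + 1 := by omega
      exact this ▸ hm

lemma not_invGen_zero [Nontrivial G] (x : ℕ → G) : ¬ InvGen (fun i : Fin 0 => x i) := by
  intro h
  have := h (fun i => x i) (fun i => IsConj.refl _)
  rw [Set.range_eq_empty, Subgroup.closure_empty] at this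
  exact absurd this bot_ne_top

lemma sum_range_odd (m : ℕ) : (∑ n ∈ Finset.range m, (2 * (n : ℝ≥0∞) + 1)) = (m : ℝ≥0∞) ^ 2 := by
  induction m with
  | zero => simp
  | succ k ih =>
    rw [Finset.sum_range_succ, ih]
    push_cast
    ring

section TauPointwise

variable {Ω : Type*} (X : ℕ → Ω → G) (ω : Ω) [Nontrivial G]

open Classical in
lemma tau_cases :
    (∃ m : ℕ, 1 ≤ m ∧ InvGen (fun i : Fin m => X i ω)
        ∧ (∀ k, InvGen (fun i : Fin k => X i ω) ↔ m ≤ k) ∧ tau X ω = m)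
      ∨ ((∀ n, ¬ InvGen (fun i : Fin n => X i ω)) ∧ tau X ω = ⊤) := by
  by_cases hex : ∃ n, InvGen (fun i : Fin n => X i ω)
  · left
    set m := Nat.find hex with hm
    have hAm : InvGen (fun i : Fin m => X i ω) := Nat.find_spec hex
    have hm1 : 1 ≤ m := by
      rcases Nat.eq_zero_or_pos m with h0 | h1
      · exact absurd (h0 ▸ hAm) (not_invGen_zero (fun n => X n ω))
      · exact h1
    have hiff : ∀ k, InvGen (fun i : Fin k => X i ω) ↔ m ≤ k := by
      intro k
      constructor
      · intro hk
        by_contra hlt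
        exact Nat.find_min hex (by omega) hk
      · intro hk
        exact invGen_le (x := fun n => X n ω) hk hAm
    refine ⟨m, hm1, hAm, hiff, ?_⟩
    apply le_antisymm
    · exact sInf_le ⟨m, rfl, hm1, hAm⟩
    · apply le_sInf
      rintro t ⟨n, rfl, h1, hA⟩
      exact_mod_cast Nat.cast_le.mpr ((hiff n).mp hA)
  · right
    push_neg at hex
    refine ⟨hex, ?_⟩
    have : {t : ℝ≥0∞ | ∃ n : ℕ, t = n ∧ 1 ≤ n ∧ InvGen (fun i : Fin n => X i ω)} = ∅ := by
      ext t
      simp only [Set.mem_setOf_eq, Set.mem_empty_iff_false, iff_false]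
      rintro ⟨n, rfl, _, hA⟩
      exact hex n hA
    rw [tau, this, sInf_empty]

open Classical in
lemma tau_eq_tsum :
    tau X ω = ∑' n : ℕ, (if InvGen (fun i : Fin n => X i ω) then 0 else 1 : ℝ≥0∞) := by
  rcases tau_cases X ω with ⟨m, hm1, _, hiff, htau⟩ | ⟨hall, htau⟩
  · rw [htau]
    rw [tsum_eq_sum (s := Finset.range m) (by
      intro n hn
      rw [Finset.mem_range, not_lt] at hn
      rw [if_pos ((hiff n).mpr hn)])]
    have h2 : (∑ n ∈ Finset.range m, (if InvGen (fun i : Fin n => X i ω) then 0 else 1 : ℝ≥0∞))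
        = ∑ _n ∈ Finset.range m, (1 : ℝ≥0∞) := by
      refine Finset.sum_congr rfl fun n hn => ?_
      rw [Finset.mem_range] at hn
      rw [if_neg (fun hA => absurd ((hiff n).mp hA) (by omega))]
    rw [h2]
    simp
  · rw [htau]
    have : ∀ n : ℕ, (if InvGen (fun i : Fin n => X i ω) then 0 else 1 : ℝ≥0∞) = 1 := by
      intro n; rw [if_neg (hall n)]
    rw [tsum_congr this]
    exact (ENNReal.tsum_const_eq_top_of_ne_zero one_ne_zero).symm

open Classical in
lemma tau_sq_eq_tsum :
    (tau X ω) ^ 2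
      = ∑' n : ℕ, (2 * (n : ℝ≥0∞) + 1)
          * (if InvGen (fun i : Fin n => X i ω) then 0 else 1 : ℝ≥0∞) := by
  rcases tau_cases X ω with ⟨m, hm1, _, hiff, htau⟩ | ⟨hall, htau⟩
  · rw [htau]
    rw [tsum_eq_sum (s := Finset.range m) (by
      intro n hn
      rw [Finset.mem_range, not_lt] at hn
      rw [if_pos ((hiff n).mpr hn), mul_zero])]
    have h2 : (∑ n ∈ Finset.range m, (2 * (n : ℝ≥0∞) + 1)
          * (if InvGen (fun i : Fin n => X i ω) then 0 else 1 : ℝ≥0∞))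
        = ∑ n ∈ Finset.range m, (2 * (n : ℝ≥0∞) + 1) := by
      refine Finset.sum_congr rfl fun n hn => ?_
      rw [Finset.mem_range] at hn
      rw [if_neg (fun hA => absurd ((hiff n).mp hA) (by omega)), mul_one]
    rw [h2]
    exact (sum_range_odd m).symm
  · rw [htau]
    rw [ENNReal.top_pow (by norm_num), eq_comm, ← top_le_iff]
    calc (⊤ : ℝ≥0∞) = ∑' _ : ℕ, (1 : ℝ≥0∞) :=
          (ENNReal.tsum_const_eq_top_of_ne_zero one_ne_zero).symm
      _ ≤ _ := by
          apply ENNReal.tsum_le_tsum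
          intro n
          rw [if_neg (hall n), mul_one]
          exact le_add_self

end TauPointwise

end Chebotarev

namespace HqAux

open Chebotarev MeasureTheory ProbabilityTheory ENNReal

variable {F : Type*} [Field F] [Fintype F]

instance : Nontrivial ↥(Hq F) := by
  refine ⟨eH 1 1, 1, fun h => ?_⟩
  rw [← eH_one] at h
  exact one_ne_zero (eH_inj h).2

variable {Ω : Type*} [MeasurableSpace Ω] {P : Measure Ω} {X : ℕ → Ω → ↥(Hq F)}

lemma meas_preimage (hset : IsChebSetup P X) (i : ℕ) (A : Set ↥(Hq F)) :
    P (X i ⁻¹' A) = (Nat.card ↥A : ℝ≥0∞) * (Nat.card ↥(Hq F) : ℝ≥0∞)⁻¹ := by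
  classical
  letI : Fintype ↥(Hq F) := Fintype.ofFinite _
  have hrw : X i ⁻¹' A = ⋃ g ∈ A.toFinset, X i ⁻¹' {g} := by
    ext ω
    simp [Set.mem_iUnion]
  rw [hrw, measure_biUnion_finset]
  · have hterm : ∀ g ∈ A.toFinset, P (X i ⁻¹' {g}) = (Nat.card ↥(Hq F) : ℝ≥0∞)⁻¹ := by
      intro g _
      have h := hset.2.2.2 i g
      have : X i ⁻¹' {g} = {ω | X i ω = g} := rfl
      rw [this, h]
    rw [Finset.sum_congr rfl hterm, Finset.sum_const, Set.toFinset_card,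
      ← Nat.card_eq_fintype_card]
    rw [nsmul_eq_mul]
  · intro g _ h _ hne
    simp only [Function.onFun]
    rw [Set.disjoint_left]
    rintro ω h1 h2
    exact hne ((Set.mem_preimage.mp h1).symm.trans (Set.mem_preimage.mp h2))
  · intro g _
    exact hset.2.1 i MeasurableSpace.measurableSet_top

lemma meas_iInter_preimage (hset : IsChebSetup P X) (n : ℕ) (A : Set ↥(Hq F)) :
    P (⋂ i ∈ Finset.range n, X i ⁻¹' A)
      = ((Nat.card ↥A : ℝ≥0∞) * (Nat.card ↥(Hq F) : ℝ≥0∞)⁻¹) ^ n := by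
  rw [hset.2.2.1.measure_inter_preimage_eq_mul (Finset.range n)
    (sets := fun _ => A) (fun i _ => MeasurableSpace.measurableSet_top)]
  rw [Finset.prod_congr rfl (fun i _ => meas_preimage hset i A), Finset.prod_const,
    Finset.card_range]

/-- the T event -/
def Tset (X : ℕ → Ω → ↥(Hq F)) (n : ℕ) : Set Ω :=
  {ω | ¬ InvGen (fun i : Fin n => X i ω)}

lemma Tset_eq (n : ℕ) :
    Tset X n = (⋂ i ∈ Finset.range n, X i ⁻¹' (A1set F))
        ∪ ⋃ K ∈ {K : Subgroup Fˣ | K ≠ ⊤},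
            ⋂ i ∈ Finset.range n, X i ⁻¹' (pihom ⁻¹' (K : Set Fˣ)) := by
  ext ω
  simp only [Tset, Set.mem_setOf_eq, Set.mem_union, Set.mem_iUnion, Set.mem_iInter,
    Set.mem_preimage, Finset.mem_range, SetLike.mem_coe]
  rw [notInvGen_iff]
  constructor
  · rintro (hA | ⟨K, hK, hKx⟩)
    · left
      intro i hi
      exact hA ⟨i, hi⟩
    · right
      exact ⟨K, hK, fun i hi => hKx ⟨i, hi⟩⟩
  · rintro (hA | ⟨K, hK, hKx⟩)
    · left
      intro i
      exact hA i i.2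
    · right
      exact ⟨K, hK, fun i => hKx i i.2⟩

lemma measurable_Tset (hset : IsChebSetup P X) (n : ℕ) : MeasurableSet (Tset X n) := by
  rw [Tset_eq]
  have hpre : ∀ (i : ℕ) (A : Set ↥(Hq F)), MeasurableSet (X i ⁻¹' A) :=
    fun i A => hset.2.1 i MeasurableSpace.measurableSet_top
  apply MeasurableSet.union
  · exact MeasurableSet.biInter (Set.to_countable _) (fun i _ => hpre i _)
  · exact MeasurableSet.biUnion (Set.to_countable _)
      (fun K _ => MeasurableSet.biInter (Set.to_countable _) (fun i _ => hpre i _))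

lemma lintegral_tau (hset : IsChebSetup P X) :
    ∫⁻ ω, tau X ω ∂P = ∑' n : ℕ, P (Tset X n) := by
  have h1 : ∀ ω, tau X ω
      = ∑' n : ℕ, (Tset X n).indicator (fun _ => (1 : ℝ≥0∞)) ω := by
    intro ω
    rw [tau_eq_tsum X ω]
    refine tsum_congr fun n => ?_
    by_cases h : InvGen (fun i : Fin n => X i ω)
    · rw [if_pos h, Set.indicator_of_notMem (show ω ∉ Tset X n from fun hmem => hmem h)]
    · rw [if_neg h, Set.indicator_of_mem (show ω ∈ Tset X n from h)]
  rw [lintegral_congr h1,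
    lintegral_tsum (fun n => ((measurable_const.indicator (measurable_Tset hset n)).aemeasurable))]
  refine tsum_congr fun n => ?_
  rw [lintegral_indicator (measurable_Tset hset n)]
  simp

lemma lintegral_tau_sq (hset : IsChebSetup P X) :
    ∫⁻ ω, (tau X ω) ^ 2 ∂P
      = ∑' n : ℕ, (2 * (n : ℝ≥0∞) + 1) * P (Tset X n) := by
  have h1 : ∀ ω, (tau X ω) ^ 2
      = ∑' n : ℕ, (2 * (n : ℝ≥0∞) + 1) * (Tset X n).indicator (fun _ => (1 : ℝ≥0∞)) ω := by
    intro ω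
    rw [tau_sq_eq_tsum X ω]
    refine tsum_congr fun n => ?_
    congr 1
    by_cases h : InvGen (fun i : Fin n => X i ω)
    · rw [if_pos h, Set.indicator_of_notMem (show ω ∉ Tset X n from fun hmem => hmem h)]
    · rw [if_neg h, Set.indicator_of_mem (show ω ∈ Tset X n from h)]
  rw [lintegral_congr h1,
    lintegral_tsum (fun n =>
      ((measurable_const.indicator (measurable_Tset hset n)).const_mul _).aemeasurable)]
  refine tsum_congr fun n => ?_
  rw [lintegral_const_mul _ (measurable_const.indicator (measurable_Tset hset n)),
    lintegral_indicator (measurable_Tset hset n)]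
  simp

lemma Tset_lower (n : ℕ) :
    (⋂ i ∈ Finset.range n, X i ⁻¹' (A1set F)) ⊆ Tset X n := by
  intro ω hω
  simp only [Set.mem_iInter, Set.mem_preimage, Finset.mem_range] at hω
  show ¬ InvGen _
  rw [notInvGen_iff]
  left
  exact fun i => hω i i.2

end HqAux

namespace HqAux

open Chebotarev MeasureTheory ENNReal

section MainBounds

variable {F : Type*} [Field F] [Fintype F]
variable {Ω : Type*} [MeasurableSpace Ω] {P : Measure Ω} {X : ℕ → Ω → ↥(Hq F)}

lemma natmul_inv_eq_ofReal (a b : ℕ) (hb : 0 < b) :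
    (a : ℝ≥0∞) * (b : ℝ≥0∞)⁻¹ = ENNReal.ofReal ((a : ℝ) / b) := by
  rw [ENNReal.ofReal_div_of_pos (by exact_mod_cast hb), ENNReal.ofReal_natCast,
    ENNReal.ofReal_natCast]
  rfl

omit [Fintype F] in
lemma two_le_cardF [Fintype F] : 2 ≤ Fintype.card F := Fintype.one_lt_card

lemma cardHq_real :
    ((Nat.card ↥(Hq F) : ℕ) : ℝ) = ((Fintype.card F : ℝ) - 1) * (Fintype.card F : ℝ) := by
  rw [card_Hq, Nat.cast_mul, Nat.cast_sub (by have := two_le_cardF (F := F); omega)]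
  norm_num

lemma r1_eq :
    (Nat.card ↥(A1set F) : ℝ≥0∞) * (Nat.card ↥(Hq F) : ℝ≥0∞)⁻¹
      = ENNReal.ofReal (((Fintype.card F : ℝ) - 1) / (Fintype.card F : ℝ)) := by
  have hq : 2 ≤ Fintype.card F := two_le_cardF
  rw [natmul_inv_eq_ofReal _ _ Nat.card_pos]
  congr 1
  rw [card_A1_real hq, cardHq_real]
  have h1 : (Fintype.card F : ℝ) - 1 ≠ 0 := by
    have : (2 : ℝ) ≤ (Fintype.card F : ℝ) := by exact_mod_cast hq
    linarith
  have h2 : (Fintype.card F : ℝ) ≠ 0 := by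
    have : (2 : ℝ) ≤ (Fintype.card F : ℝ) := by exact_mod_cast hq
    linarith
  field_simp

lemma rK_eq (K : Subgroup Fˣ) :
    (Nat.card ↥(pihom ⁻¹' (K : Set Fˣ) : Set ↥(Hq F)) : ℝ≥0∞) * (Nat.card ↥(Hq F) : ℝ≥0∞)⁻¹
      = ENNReal.ofReal ((Nat.card K : ℝ) / ((Fintype.card F : ℝ) - 1)) := by
  have hq : 2 ≤ Fintype.card F := two_le_cardF
  rw [natmul_inv_eq_ofReal _ _ Nat.card_pos]
  congr 1
  rw [card_AK, Nat.cast_mul, cardHq_real]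
  have h1 : (Fintype.card F : ℝ) - 1 ≠ 0 := by
    have : (2 : ℝ) ≤ (Fintype.card F : ℝ) := by exact_mod_cast hq
    linarith
  have h2 : (Fintype.card F : ℝ) ≠ 0 := by
    have : (2 : ℝ) ≤ (Fintype.card F : ℝ) := by exact_mod_cast hq
    linarith
  field_simp

lemma xK_nonneg (K : Subgroup Fˣ) : 0 ≤ (Nat.card K : ℝ) / ((Fintype.card F : ℝ) - 1) := by
  have hq : 2 ≤ Fintype.card F := two_le_cardF
  have : (2 : ℝ) ≤ (Fintype.card F : ℝ) := by exact_mod_cast hq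
  exact div_nonneg (Nat.cast_nonneg _) (by linarith)

lemma xK_le_half {K : Subgroup Fˣ} (hK : K ≠ ⊤) :
    (Nat.card K : ℝ) / ((Fintype.card F : ℝ) - 1) ≤ 1 / 2 := by
  have hq : 2 ≤ Fintype.card F := two_le_cardF
  have hqr : (2 : ℝ) ≤ (Fintype.card F : ℝ) := by exact_mod_cast hq
  have h := card_K_le K hK
  have hcast : 2 * (Nat.card K : ℝ) ≤ (Fintype.card F : ℝ) - 1 := by
    have := Nat.cast_le (α := ℝ).mpr h
    rw [Nat.cast_mul, Nat.cast_sub (by omega)] at this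
    simpa using this
  rw [div_le_div_iff₀ (by linarith) (by norm_num)]
  linarith

lemma x1_nonneg : 0 ≤ ((Fintype.card F : ℝ) - 1) / (Fintype.card F : ℝ) := by
  have hqr : (2 : ℝ) ≤ (Fintype.card F : ℝ) := by exact_mod_cast two_le_cardF (F := F)
  exact div_nonneg (by linarith) (by linarith)

lemma x1_lt_one : ((Fintype.card F : ℝ) - 1) / (Fintype.card F : ℝ) < 1 := by
  have hqr : (2 : ℝ) ≤ (Fintype.card F : ℝ) := by exact_mod_cast two_le_cardF (F := F)
  rw [div_lt_one (by linarith)]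
  linarith

lemma props_card_le (s : Finset (Subgroup Fˣ)) (hs : ∀ K ∈ s, K ≠ ⊤) :
    s.card ≤ (Fintype.card F - 1).divisors.card := by
  have hq : 2 ≤ Fintype.card F := two_le_cardF
  refine Finset.card_le_card_of_injOn (fun K => Nat.card K) ?_ ?_
  · intro K hK
    apply Nat.mem_divisors.mpr
    constructor
    · have := Subgroup.card_subgroup_dvd_card K
      rwa [Nat.card_units, Nat.card_eq_fintype_card (α := F)] at this
    · omega
  · intro K _ K' _ h
    exact subgroup_units_card_inj h

lemma P_Tset_lower (hset : IsChebSetup P X) (n : ℕ) :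
    (ENNReal.ofReal (((Fintype.card F : ℝ) - 1) / (Fintype.card F : ℝ))) ^ n
      ≤ P (Tset X n) := by
  rw [← r1_eq, ← meas_iInter_preimage hset n (A1set F)]
  exact measure_mono (Tset_lower n)

lemma P_Tset_upper (hset : IsChebSetup P X)
    (s : Finset (Subgroup Fˣ)) (hs : ∀ K : Subgroup Fˣ, K ≠ ⊤ → K ∈ s) (n : ℕ) :
    P (Tset X n) ≤ (ENNReal.ofReal (((Fintype.card F : ℝ) - 1) / (Fintype.card F : ℝ))) ^ n
      + ∑ K ∈ s, (ENNReal.ofReal ((Nat.card K : ℝ) / ((Fintype.card F : ℝ) - 1))) ^ n := by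
  rw [Tset_eq]
  refine (measure_union_le _ _).trans ?_
  apply add_le_add
  · rw [← r1_eq, ← meas_iInter_preimage hset n (A1set F)]
  · have hsub : (⋃ K ∈ {K : Subgroup Fˣ | K ≠ ⊤},
        ⋂ i ∈ Finset.range n, X i ⁻¹' (pihom ⁻¹' (K : Set Fˣ)))
        ⊆ ⋃ K ∈ (s : Set (Subgroup Fˣ)),
          ⋂ i ∈ Finset.range n, X i ⁻¹' (pihom ⁻¹' (K : Set Fˣ)) := by
      apply Set.biUnion_subset_biUnion_left
      intro K hK
      exact hs K hK
    refine (measure_mono hsub).trans ?_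
    refine (measure_biUnion_finset_le s _).trans ?_
    apply Finset.sum_le_sum
    intro K _
    rw [← rK_eq, ← meas_iInter_preimage hset n]

end MainBounds

end HqAux

namespace HqAux

open Chebotarev MeasureTheory ENNReal

section Assemble

variable {F : Type*} [Field F] [Fintype F]
variable {Ω : Type*} [MeasurableSpace Ω] {P : Measure Ω} {X : ℕ → Ω → ↥(Hq F)}

lemma inv_one_sub_le_two {x : ℝ} (h0 : 0 ≤ x) (hx : x ≤ 1/2) : (1 - x)⁻¹ ≤ 2 := by
  have h : (1:ℝ)/2 ≤ 1 - x := by linarith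
  calc (1 - x)⁻¹ ≤ ((1:ℝ)/2)⁻¹ := by
        apply inv_anti₀ (by norm_num) h
    _ = 2 := by norm_num

lemma lin_ratio_le_six {x : ℝ} (h0 : 0 ≤ x) (hx : x ≤ 1/2) : (1 + x) / (1 - x) ^ 2 ≤ 6 := by
  have h2 : (0:ℝ) < (1 - x)^2 := by nlinarith
  rw [div_le_iff₀ h2]
  nlinarith [mul_nonneg (by linarith : (0:ℝ) ≤ 1 - 2*x) (by linarith : (0:ℝ) ≤ 5 - 3*x)]

lemma cheb_bounds (hset : IsChebSetup P X) :
    (Fintype.card F : ℝ) ≤ cheb P X ∧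
      cheb P X ≤ (Fintype.card F : ℝ) + 2 * ((Fintype.card F - 1).divisors.card : ℝ) := by
  classical
  haveI : Finite (Subgroup Fˣ) :=
    Finite.of_injective (fun H => (H : Set Fˣ)) SetLike.coe_injective
  letI : Fintype (Subgroup Fˣ) := Fintype.ofFinite _
  set s : Finset (Subgroup Fˣ) := Finset.univ.filter (fun K => K ≠ ⊤) with hsdef
  have hsmem : ∀ K : Subgroup Fˣ, K ≠ ⊤ → K ∈ s := fun K h => by simp [hsdef, h]
  have hsprop : ∀ K ∈ s, K ≠ ⊤ := fun K h => by
    simp only [hsdef, Finset.mem_filter] at h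
    exact h.2
  have hQ : (2:ℝ) ≤ (Fintype.card F : ℝ) := by exact_mod_cast two_le_cardF (F := F)
  set Q := (Fintype.card F : ℝ) with hQdef
  set x₁ := (Q - 1)/Q with hx1def
  have h0 : 0 ≤ x₁ := x1_nonneg
  have h1 : x₁ < 1 := x1_lt_one
  set τd := ((Fintype.card F - 1).divisors.card : ℝ) with hτdef
  have hτ0 : 0 ≤ τd := Nat.cast_nonneg _
  have hone : 1 - x₁ = 1/Q := by
    rw [hx1def]
    field_simp
    ring
  have hgeo1 : ∑' n : ℕ, (ENNReal.ofReal x₁)^n = ENNReal.ofReal Q := by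
    rw [tsum_geo_ofReal h0 h1, hone]
    congr 1
    rw [one_div, inv_inv]
  have hup : ∑' n : ℕ, P (Tset X n) ≤ ENNReal.ofReal (Q + 2 * τd) := by
    calc ∑' n : ℕ, P (Tset X n)
        ≤ ∑' n : ℕ, ((ENNReal.ofReal x₁)^n
            + ∑ K ∈ s, (ENNReal.ofReal ((Nat.card K : ℝ) / (Q - 1)))^n) :=
          ENNReal.tsum_le_tsum (fun n => P_Tset_upper hset s hsmem n)
      _ = ENNReal.ofReal Q
            + ∑ K ∈ s, ∑' n : ℕ, (ENNReal.ofReal ((Nat.card K : ℝ) / (Q - 1)))^n := by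
          rw [ENNReal.tsum_add, hgeo1, Summable.tsum_finsetSum (fun _ _ => ENNReal.summable)]
      _ ≤ ENNReal.ofReal Q + ∑ _K ∈ s, ENNReal.ofReal 2 := by
          gcongr with K hK
          rw [tsum_geo_ofReal (xK_nonneg K)
            (lt_of_le_of_lt (xK_le_half (hsprop K hK)) (by norm_num))]
          exact ENNReal.ofReal_le_ofReal
            (inv_one_sub_le_two (xK_nonneg K) (xK_le_half (hsprop K hK)))
      _ ≤ ENNReal.ofReal (Q + 2 * τd) := by
          rw [Finset.sum_const, nsmul_eq_mul]
          have hcard : (s.card : ℝ≥0∞) ≤ ENNReal.ofReal τd := by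
            rw [hτdef, ENNReal.ofReal_natCast]
            exact_mod_cast props_card_le s hsprop
          calc ENNReal.ofReal Q + (s.card : ℝ≥0∞) * ENNReal.ofReal 2
              ≤ ENNReal.ofReal Q + ENNReal.ofReal τd * ENNReal.ofReal 2 := by gcongr
            _ = ENNReal.ofReal (Q + 2 * τd) := by
                rw [← ENNReal.ofReal_mul hτ0, ← ENNReal.ofReal_add (by linarith) (by linarith [hτ0])]
                ring_nf
  have hlow : ENNReal.ofReal Q ≤ ∑' n : ℕ, P (Tset X n) := by
    rw [← hgeo1]
    exact ENNReal.tsum_le_tsum (P_Tset_lower hset)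
  have hfin : ∑' n : ℕ, P (Tset X n) ≠ ⊤ := ne_top_of_le_ne_top ENNReal.ofReal_ne_top hup
  have hcheb : cheb P X = (∑' n : ℕ, P (Tset X n)).toReal := by
    rw [cheb, lintegral_tau hset]
  constructor
  · have := ENNReal.toReal_mono hfin hlow
    rwa [ENNReal.toReal_ofReal (by linarith), ← hcheb] at this
  · have := ENNReal.toReal_mono ENNReal.ofReal_ne_top hup
    rwa [ENNReal.toReal_ofReal (by linarith), ← hcheb] at this

lemma scheb_bounds (hset : IsChebSetup P X) :
    (Fintype.card F : ℝ) * (2 * (Fintype.card F : ℝ) - 1) ≤ scheb P X ∧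
      scheb P X ≤ (Fintype.card F : ℝ) * (2 * (Fintype.card F : ℝ) - 1)
        + 6 * ((Fintype.card F - 1).divisors.card : ℝ) := by
  classical
  haveI : Finite (Subgroup Fˣ) :=
    Finite.of_injective (fun H => (H : Set Fˣ)) SetLike.coe_injective
  letI : Fintype (Subgroup Fˣ) := Fintype.ofFinite _
  set s : Finset (Subgroup Fˣ) := Finset.univ.filter (fun K => K ≠ ⊤) with hsdef
  have hsmem : ∀ K : Subgroup Fˣ, K ≠ ⊤ → K ∈ s := fun K h => by simp [hsdef, h]
  have hsprop : ∀ K ∈ s, K ≠ ⊤ := fun K h => by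
    simp only [hsdef, Finset.mem_filter] at h
    exact h.2
  have hQ : (2:ℝ) ≤ (Fintype.card F : ℝ) := by exact_mod_cast two_le_cardF (F := F)
  set Q := (Fintype.card F : ℝ) with hQdef
  set x₁ := (Q - 1)/Q with hx1def
  have h0 : 0 ≤ x₁ := x1_nonneg
  have h1 : x₁ < 1 := x1_lt_one
  set τd := ((Fintype.card F - 1).divisors.card : ℝ) with hτdef
  have hτ0 : 0 ≤ τd := Nat.cast_nonneg _
  have hQ0 : Q ≠ 0 := by linarith
  have hlin1 : (1 + x₁) / (1 - x₁)^2 = Q * (2 * Q - 1) := by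
    rw [hx1def]
    field_simp
    ring
  have hgeo2 : ∑' n : ℕ, (2 * (n : ℝ≥0∞) + 1) * (ENNReal.ofReal x₁)^n
      = ENNReal.ofReal (Q * (2 * Q - 1)) := by
    rw [tsum_lin_ofReal h0 h1, hlin1]
  have hup : ∑' n : ℕ, (2 * (n : ℝ≥0∞) + 1) * P (Tset X n)
      ≤ ENNReal.ofReal (Q * (2 * Q - 1) + 6 * τd) := by
    calc ∑' n : ℕ, (2 * (n : ℝ≥0∞) + 1) * P (Tset X n)
        ≤ ∑' n : ℕ, ((2 * (n : ℝ≥0∞) + 1) * (ENNReal.ofReal x₁)^n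
            + ∑ K ∈ s, (2 * (n : ℝ≥0∞) + 1)
              * (ENNReal.ofReal ((Nat.card K : ℝ) / (Q - 1)))^n) := by
          apply ENNReal.tsum_le_tsum
          intro n
          rw [← Finset.mul_sum, ← mul_add]
          exact mul_le_mul_right (P_Tset_upper hset s hsmem n) _
      _ = ENNReal.ofReal (Q * (2 * Q - 1))
            + ∑ K ∈ s, ∑' n : ℕ, (2 * (n : ℝ≥0∞) + 1)
              * (ENNReal.ofReal ((Nat.card K : ℝ) / (Q - 1)))^n := by
          rw [ENNReal.tsum_add, hgeo2, Summable.tsum_finsetSum (fun _ _ => ENNReal.summable)]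
      _ ≤ ENNReal.ofReal (Q * (2 * Q - 1)) + ∑ _K ∈ s, ENNReal.ofReal 6 := by
          gcongr with K hK
          rw [tsum_lin_ofReal (xK_nonneg K)
            (lt_of_le_of_lt (xK_le_half (hsprop K hK)) (by norm_num))]
          exact ENNReal.ofReal_le_ofReal
            (lin_ratio_le_six (xK_nonneg K) (xK_le_half (hsprop K hK)))
      _ ≤ ENNReal.ofReal (Q * (2 * Q - 1) + 6 * τd) := by
          rw [Finset.sum_const, nsmul_eq_mul]
          have hcard : (s.card : ℝ≥0∞) ≤ ENNReal.ofReal τd := by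
            rw [hτdef, ENNReal.ofReal_natCast]
            exact_mod_cast props_card_le s hsprop
          calc ENNReal.ofReal (Q * (2 * Q - 1)) + (s.card : ℝ≥0∞) * ENNReal.ofReal 6
              ≤ ENNReal.ofReal (Q * (2 * Q - 1)) + ENNReal.ofReal τd * ENNReal.ofReal 6 := by
                gcongr
            _ = ENNReal.ofReal (Q * (2 * Q - 1) + 6 * τd) := by
                rw [← ENNReal.ofReal_mul hτ0,
                  ← ENNReal.ofReal_add (by nlinarith) (by linarith [hτ0])]
                ring_nf
  have hlow : ENNReal.ofReal (Q * (2 * Q - 1))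
      ≤ ∑' n : ℕ, (2 * (n : ℝ≥0∞) + 1) * P (Tset X n) := by
    rw [← hgeo2]
    apply ENNReal.tsum_le_tsum
    intro n
    exact mul_le_mul_right (P_Tset_lower hset n) _
  have hfin : ∑' n : ℕ, (2 * (n : ℝ≥0∞) + 1) * P (Tset X n) ≠ ⊤ :=
    ne_top_of_le_ne_top ENNReal.ofReal_ne_top hup
  have hscheb : scheb P X = (∑' n : ℕ, (2 * (n : ℝ≥0∞) + 1) * P (Tset X n)).toReal := by
    rw [scheb, lintegral_tau_sq hset]
  constructor
  · have := ENNReal.toReal_mono hfin hlow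
    rwa [ENNReal.toReal_ofReal (by nlinarith), ← hscheb] at this
  · have := ENNReal.toReal_mono ENNReal.ofReal_ne_top hup
    rwa [ENNReal.toReal_ofReal (by nlinarith), ← hscheb] at this

end Assemble

end HqAux

namespace HqAux

lemma divisors_card_le (m : ℕ) : m.divisors.card ≤ 2 * (Nat.sqrt m + 1) := by
  classical
  have h := Finset.card_le_card_of_injOn
    (f := fun d => if d ≤ m.sqrt then ((0 : ℕ), d) else (1, m / d))
    (s := m.divisors) (t := ({0, 1} : Finset ℕ) ×ˢ Finset.range (m.sqrt + 1)) ?_ ?_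
  · calc m.divisors.card ≤ _ := h
      _ = 2 * (Nat.sqrt m + 1) := by
        rw [Finset.card_product, Finset.card_range]
        norm_num
  · intro d hd
    rw [Finset.mem_coe, Nat.mem_divisors] at hd; rw [Finset.mem_coe]
    obtain ⟨hdvd, hm⟩ := hd
    have hd0 : 0 < d := Nat.pos_of_dvd_of_pos hdvd (Nat.pos_of_ne_zero hm)
    dsimp only
    by_cases hle : d ≤ m.sqrt
    · rw [if_pos hle]
      rw [Finset.mem_product, Finset.mem_range]
      constructor
      · simp
      · simpa using Nat.lt_succ_of_le hle
    · rw [if_neg hle]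
      rw [Finset.mem_product, Finset.mem_range]
      push_neg at hle
      constructor
      · simp
      · simp only []
        have : m / d < m.sqrt + 1 := by
          rw [Nat.div_lt_iff_lt_mul hd0]
          calc m < (m.sqrt + 1) * (m.sqrt + 1) := Nat.lt_succ_sqrt m
            _ ≤ (m.sqrt + 1) * d := by
                apply Nat.mul_le_mul_left
                omega
        simpa using this
  · intro d hd d' hd' heq
    simp only [Finset.mem_coe, Nat.mem_divisors] at hd hd'
    dsimp only at heq
    by_cases h1 : d ≤ m.sqrt <;> by_cases h2 : d' ≤ m.sqrt
    · rw [if_pos h1, if_pos h2] at heq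
      exact (Prod.mk.injEq _ _ _ _).mp heq |>.2
    · rw [if_pos h1, if_neg h2] at heq
      exact absurd ((Prod.mk.injEq _ _ _ _).mp heq).1 (by norm_num)
    · rw [if_neg h1, if_pos h2] at heq
      exact absurd ((Prod.mk.injEq _ _ _ _).mp heq).1 (by norm_num)
    · rw [if_neg h1, if_neg h2] at heq
      have hdiv : m / d = m / d' := ((Prod.mk.injEq _ _ _ _).mp heq).2
      have e1 : m / (m / d) = d := Nat.div_div_self hd.1 hd.2
      have e2 : m / (m / d') = d' := Nat.div_div_self hd'.1 hd'.2
      rw [← e1, hdiv, e2]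

lemma divisors_card_sq_le (q : ℕ) (hq : 2 ≤ q) :
    ((q - 1).divisors.card) ^ 2 ≤ 16 * q := by
  have h1 := divisors_card_le (q - 1)
  set s := Nat.sqrt (q - 1) with hs
  have hs1 : 1 ≤ s := by
    rw [hs]
    have : 0 < Nat.sqrt (q - 1) ↔ 0 < q - 1 := Nat.sqrt_pos
    omega
  have hs2 : s * s ≤ q - 1 := Nat.sqrt_le' (q - 1) |>.trans_eq' (by rw [pow_two])
  have hcard : (q - 1).divisors.card ≤ 2 * (s + 1) := h1
  calc ((q - 1).divisors.card) ^ 2 ≤ (2 * (s + 1)) ^ 2 := Nat.pow_le_pow_left hcard 2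
    _ = 4 * ((s + 1) * (s + 1)) := by ring
    _ ≤ 4 * (4 * (s * s)) := by
        apply Nat.mul_le_mul_left
        nlinarith
    _ ≤ 16 * q := by
        have : s * s ≤ q := by omega
        nlinarith

end HqAux


open Chebotarev

/-- **Proposition (asymptotics of the Chebotarev invariants of `H_q`).** There is an absolute
constant `C` such that for every finite field `F` with `q ≥ 2` elements and every independent
uniform sequence on `H_q`: `|c(H_q) - q| ≤ C τ(q-1)` and `|s(H_q) - q(2q-1)| ≤ C τ(q-1)`,
where `τ(q-1)` is the number of positive divisors of `q-1`.  In particular `c(H_q) ∼ q` as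
`q → ∞`. -/
theorem cheb_Hq_asymptotics :
    (∃ C : ℝ, 0 ≤ C ∧ ∀ (F : Type) (_ : Field F) (_ : Fintype F),
      ∀ (Ω : Type) (_ : MeasurableSpace Ω) (P : Measure Ω) (X : ℕ → Ω → Hq F),
        IsChebSetup P X →
          |cheb P X - (Fintype.card F : ℝ)| ≤ C * ((Fintype.card F - 1).divisors.card : ℝ) ∧
          |scheb P X - (Fintype.card F : ℝ) * (2 * (Fintype.card F : ℝ) - 1)|
            ≤ C * ((Fintype.card F - 1).divisors.card : ℝ)) ∧
    ∀ ε : ℝ, 0 < ε → ∃ N : ℕ, ∀ (F : Type) (_ : Field F) (_ : Fintype F),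
      N ≤ Fintype.card F →
      ∀ (Ω : Type) (_ : MeasurableSpace Ω) (P : Measure Ω) (X : ℕ → Ω → Hq F),
        IsChebSetup P X → |cheb P X / (Fintype.card F : ℝ) - 1| < ε := by
  constructor
  · refine ⟨6, by norm_num, ?_⟩
    intro F hF hFin Ω mΩ P X hset
    letI := hF; letI := hFin
    obtain ⟨hl, hu⟩ := HqAux.cheb_bounds hset
    obtain ⟨hl2, hu2⟩ := HqAux.scheb_bounds hset
    have hτ0 : (0:ℝ) ≤ ((Fintype.card F - 1).divisors.card : ℝ) := Nat.cast_nonneg _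
    constructor
    · rw [abs_le]
      constructor <;> linarith
    · rw [abs_le]
      constructor <;> linarith
  · intro ε hε
    refine ⟨⌈576 / ε ^ 2⌉₊ + 2, ?_⟩
    intro F hF hFin hN Ω mΩ P X hset
    letI := hF; letI := hFin
    have hq2 : 2 ≤ Fintype.card F := HqAux.two_le_cardF
    obtain ⟨hl, hu⟩ := HqAux.cheb_bounds hset
    have hτsq : ((Fintype.card F - 1).divisors.card) ^ 2 ≤ 16 * Fintype.card F :=
      HqAux.divisors_card_sq_le (Fintype.card F) hq2
    set q := (Fintype.card F : ℝ) with hqdef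
    set τd := (((Fintype.card F : ℕ) - 1).divisors.card : ℝ) with hτdef
    have hτ0 : (0:ℝ) ≤ τd := Nat.cast_nonneg _
    have hQpos : (0:ℝ) < q := by
      rw [hqdef]
      have : (2:ℝ) ≤ (Fintype.card F : ℝ) := by exact_mod_cast hq2
      linarith
    have key : |cheb P X / q - 1| = |cheb P X - q| / q := by
      have h1 : cheb P X / q - 1 = (cheb P X - q) / q := by field_simp
      rw [h1, abs_div, abs_of_pos hQpos]
    rw [key]
    have h1 : |cheb P X - q| ≤ 2 * τd := by
      rw [abs_le]
      constructor <;> linarith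
    have hτr : τd ^ 2 ≤ 16 * q := by
      rw [hτdef, hqdef]
      exact_mod_cast hτsq
    have hq_big : 576 / ε ^ 2 < q := by
      have hc : ((⌈576 / ε ^ 2⌉₊ + 2 : ℕ) : ℝ) ≤ q := by
        rw [hqdef]
        exact_mod_cast hN
      calc 576 / ε ^ 2 ≤ (⌈576 / ε ^ 2⌉₊ : ℝ) := Nat.le_ceil _
        _ < ((⌈576 / ε ^ 2⌉₊ + 2 : ℕ) : ℝ) := by push_cast; linarith
        _ ≤ q := hc
    have hfin : 2 * τd < ε * q := by
      have hε2 : (0:ℝ) < ε ^ 2 := by positivity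
      have h576 : (576:ℝ) < ε ^ 2 * q := by
        calc (576:ℝ) = (576 / ε ^ 2) * ε ^ 2 := by field_simp
          _ < q * ε ^ 2 := mul_lt_mul_of_pos_right hq_big hε2
          _ = ε ^ 2 * q := by ring
      have hsq : (2 * τd) ^ 2 < (ε * q) ^ 2 := by nlinarith
      nlinarith [mul_pos hε hQpos]
    calc |cheb P X - q| / q ≤ (2 * τd) / q := by
          exact div_le_div_of_nonneg_right h1 hQpos.le
      _ < ε := by
          rw [div_lt_iff₀ hQpos]
          linarith
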